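/- Let p < q < r be odd primes and write Φ_{pq}(x) = Σ_m d_m x^m (with d_m = 0 for m outside [0, φ(pq)]). Then A(pqr) ≤ max over integers i and j of |Σ_{m ≥ j} d_m χ_{mr}(i)|, where the inner sum is over all m with j ≤ m ≤ φ(pq). -/

import Mathlib

/-- The map `χ_n : ℤ → {0, ±1}` from the paper (depending on `p` and `q`).
Here `x % (p*q)` plays the role of `x̄`, the representative of `x` modulo `pq`
lying in `[0, pq − 1]`. -/
def chi (p q : ℕ) (n i : ℤ) : ℤ :=
  if ((i + 1) % (p * q) ≤ (n + p + q) % (p * q) ∧ (n + q) % (p * q) < (i + 1) % (p * q)) ∨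
     ((i + 1) % (p * q) ≤ (n + p + q) % (p * q) ∧ (n + p + q) % (p * q) < (n + q) % (p * q)) ∨
     ((n + p + q) % (p * q) < (n + q) % (p * q) ∧ (n + q) % (p * q) < (i + 1) % (p * q))
  then 1
  else if ((i + 1) % (p * q) ≤ (n + p) % (p * q) ∧ n % (p * q) < (i + 1) % (p * q)) ∨
     ((i + 1) % (p * q) ≤ (n + p) % (p * q) ∧ (n + p) % (p * q) < n % (p * q)) ∨
     ((n + p) % (p * q) < n % (p * q) ∧ n % (p * q) < (i + 1) % (p * q))
  then -1
  else 0

/-- `A n` is the largest absolute value of a coefficient of the `n`-th cyclotomic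
polynomial (over `ℤ`). -/
noncomputable def cycCoeffMax (n : ℕ) : ℕ :=
  (Finset.range (Nat.totient n + 1)).sup fun i => ((Polynomial.cyclotomic n ℤ).coeff i).natAbs

open Polynomial Finset

noncomputable section ChiProofAux


/-- `G = (X^q - 1)(1 + X + ... + X^{p-1})`. -/
def Gpoly (p q : ℕ) : ℤ[X] := (X ^ q - 1) * ∑ t ∈ Finset.range p, X ^ t

lemma Gpoly_coeff (p q : ℕ) (k : ℕ) :
    (Gpoly p q).coeff k =
      (if q ≤ k ∧ k < q + p then 1 else 0) - (if k < p then 1 else 0) := by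
  have hS : ∀ j : ℕ, (∑ t ∈ Finset.range p, (X:ℤ[X]) ^ t).coeff j
      = if j < p then 1 else 0 := by
    intro j
    rw [finset_sum_coeff]
    simp only [coeff_X_pow]
    rw [Finset.sum_ite_eq (Finset.range p) j (fun _ => (1:ℤ))]
    simp [Finset.mem_range]
  have : Gpoly p q = (∑ t ∈ Finset.range p, (X:ℤ[X]) ^ t) * X ^ q
      - ∑ t ∈ Finset.range p, (X:ℤ[X]) ^ t := by
    unfold Gpoly; ring
  rw [this, coeff_sub, coeff_mul_X_pow', hS]
  by_cases h : q ≤ k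
  · rw [if_pos h, hS]
    have : k - q < p ↔ k < q + p := by omega
    simp [this, h]
  · rw [if_neg h]
    have : ¬ (q ≤ k ∧ k < q + p) := by omega
    simp [this]

/-- The key polynomial identity. -/
lemma cyclotomic_mul_identity (p q r : ℕ) (hp : p.Prime) (hq : q.Prime) (hr : r.Prime)
    (hpq : p < q) (hqr : q < r) :
    cyclotomic (p * q * r) ℤ * (X ^ (p * q) - 1) =
      expand ℤ r (cyclotomic (p * q) ℤ) * Gpoly p q := by
  have hX1 : (X - 1 : ℤ[X]) ≠ 0 := by
    have := Polynomial.X_sub_C_ne_zero (1 : ℤ)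
    simpa using this
  apply mul_right_cancel₀ hX1
  -- Φ_p * (X - 1) = X^p - 1
  have hgeom : ∀ s : ℕ, s.Prime → (cyclotomic s ℤ) * (X - 1) = X ^ s - 1 := by
    intro s hs
    haveI : Fact s.Prime := ⟨hs⟩
    rw [cyclotomic_prime, geom_sum_mul]
  -- Φ_{pq} Φ_p = expand q Φ_p
  have hqp : ¬ q ∣ p := fun h => absurd (Nat.le_of_dvd hp.pos h) (by omega)
  have hexp : expand ℤ q (cyclotomic p ℤ) = cyclotomic (p * q) ℤ * cyclotomic p ℤ :=
    cyclotomic_expand_eq_cyclotomic_mul hq hqp ℤ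
  -- Φ_{pq} (X^p-1)(X^q-1) = (X^{pq}-1)(X-1)
  have key : cyclotomic (p * q) ℤ * ((X ^ p - 1) * (X ^ q - 1)) =
      (X ^ (p * q) - 1) * (X - 1) := by
    calc cyclotomic (p * q) ℤ * ((X ^ p - 1) * (X ^ q - 1))
        = (cyclotomic (p * q) ℤ * cyclotomic p ℤ) * (X - 1) * (X ^ q - 1) := by
          rw [← hgeom p hp]; ring
      _ = expand ℤ q (cyclotomic p ℤ) * (X ^ q - 1) * (X - 1) := by rw [hexp]; ring
      _ = (X ^ (p * q) - 1) * (X - 1) := by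
          haveI : Fact p.Prime := ⟨hp⟩
          rw [cyclotomic_prime, map_sum]
          simp only [map_pow, expand_X]
          have : (∑ i ∈ Finset.range p, ((X:ℤ[X]) ^ q) ^ i) * ((X:ℤ[X]) ^ q - 1)
              = ((X:ℤ[X]) ^ q) ^ p - 1 := geom_sum_mul _ _
          rw [this, ← pow_mul, mul_comm q p]
  -- expand r Φ_{pq} = Φ_{pqr} Φ_{pq}
  have hrpq : ¬ r ∣ p * q := by
    intro h
    rcases (Nat.Prime.dvd_mul hr).mp h with h' | h'
    · exact absurd (Nat.le_of_dvd hp.pos h') (by omega)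
    · exact absurd (Nat.le_of_dvd hq.pos h') (by omega)
  have hexp2 : expand ℤ r (cyclotomic (p * q) ℤ)
      = cyclotomic (p * q * r) ℤ * cyclotomic (p * q) ℤ :=
    cyclotomic_expand_eq_cyclotomic_mul hr hrpq ℤ
  calc cyclotomic (p * q * r) ℤ * (X ^ (p * q) - 1) * (X - 1)
      = cyclotomic (p * q * r) ℤ * ((X ^ (p * q) - 1) * (X - 1)) := by ring
    _ = cyclotomic (p * q * r) ℤ * (cyclotomic (p * q) ℤ * ((X ^ p - 1) * (X ^ q - 1))) := by
        rw [key]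
    _ = (cyclotomic (p * q * r) ℤ * cyclotomic (p * q) ℤ) * ((X ^ q - 1) *
          ((∑ t ∈ Finset.range p, (X:ℤ[X]) ^ t) * (X - 1))) := by
        rw [geom_sum_mul]; ring
    _ = expand ℤ r (cyclotomic (p * q) ℤ) * Gpoly p q * (X - 1) := by
        rw [hexp2, Gpoly]; ring


/-- `gz` : integer-indexed coefficients of `Gpoly`. -/
def gz (p q : ℕ) (t : ℤ) : ℤ := if t < 0 then 0 else (Gpoly p q).coeff t.toNat

/-- `az` : integer-indexed coefficients of `Φ_{pqr}`. -/
def az (M : ℕ) (t : ℤ) : ℤ := if t < 0 then 0 else (cyclotomic M ℤ).coeff t.toNat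

/-- `Tz x = Σ_m d_m gz(x - m r)`. -/
def Tz (p q r : ℕ) (x : ℤ) : ℤ :=
  ∑ m ∈ Finset.range ((p * q).totient + 1),
    (cyclotomic (p * q) ℤ).coeff m * gz p q (x - (m : ℤ) * r)

/-- expand as an explicit sum of monomials. -/
lemma expand_cyclotomic_eq (p q r : ℕ) (hr : 0 < r) :
    expand ℤ r (cyclotomic (p * q) ℤ) =
      ∑ m ∈ Finset.range ((p * q).totient + 1),
        C ((cyclotomic (p * q) ℤ).coeff m) * X ^ (r * m) := by
  conv_lhs => rw [(cyclotomic (p * q) ℤ).as_sum_range' ((p * q).totient + 1)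
    (by rw [natDegree_cyclotomic]; omega)]
  rw [map_sum]
  refine Finset.sum_congr rfl fun m _ => ?_
  rw [← C_mul_X_pow_eq_monomial, map_mul, map_pow, expand_X, expand_C, ← pow_mul]

lemma coeff_expand_mul_G (p q r : ℕ) (hr : 0 < r) (k : ℕ) :
    (expand ℤ r (cyclotomic (p * q) ℤ) * Gpoly p q).coeff k = Tz p q r k := by
  rw [expand_cyclotomic_eq p q r hr, Finset.sum_mul, finset_sum_coeff]
  refine Finset.sum_congr rfl fun m _ => ?_
  have : C ((cyclotomic (p * q) ℤ).coeff m) * X ^ (r * m) * Gpoly p q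
      = C ((cyclotomic (p * q) ℤ).coeff m) * (Gpoly p q * X ^ (r * m)) := by ring
  rw [this, coeff_C_mul, coeff_mul_X_pow']
  congr 1
  unfold gz
  have hmr : ((r * m : ℕ) : ℤ) = (m : ℤ) * (r : ℤ) := by push_cast; ring
  by_cases h : r * m ≤ k
  · rw [if_pos h, if_neg (by omega)]
    congr 1
    omega
  · rw [if_neg h, if_pos (by omega)]

/-- `Tz x = az (x - pq) - az x`. -/
lemma Tz_eq (p q r : ℕ) (hp : p.Prime) (hq : q.Prime) (hr : r.Prime)
    (hpq : p < q) (hqr : q < r)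
    (hkey : cyclotomic (p * q * r) ℤ * (X ^ (p * q) - 1) =
      expand ℤ r (cyclotomic (p * q) ℤ) * Gpoly p q)
    (x : ℤ) :
    Tz p q r x = az (p * q * r) (x - (p * q : ℕ)) - az (p * q * r) x := by
  by_cases hx : x < 0
  · have h1 : Tz p q r x = 0 := by
      apply Finset.sum_eq_zero
      intro m _
      have hg : gz p q (x - (m : ℤ) * r) = 0 := by
        unfold gz
        rw [if_pos (by have h0 : (0:ℤ) ≤ (m:ℤ) * r := mul_nonneg (Int.natCast_nonneg m) (Int.natCast_nonneg r); omega)]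
      rw [hg, mul_zero]
    rw [h1]
    unfold az
    rw [if_pos (by have h0 : (0:ℤ) ≤ ((p*q:ℕ):ℤ) := Int.natCast_nonneg _; omega), if_pos hx, sub_zero]
  · -- x = some natural number k
    obtain ⟨k, rfl⟩ := Int.eq_ofNat_of_zero_le (by omega : (0:ℤ) ≤ x)
    rw [← coeff_expand_mul_G p q r hr.pos k, ← hkey]
    have : cyclotomic (p * q * r) ℤ * (X ^ (p * q) - 1)
        = cyclotomic (p * q * r) ℤ * X ^ (p * q) - cyclotomic (p * q * r) ℤ := by ring
    rw [this, coeff_sub, coeff_mul_X_pow']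
    unfold az
    by_cases h : p * q ≤ k
    · rw [if_pos h, if_neg (by push_cast; omega), if_neg (by push_cast; omega)]
      congr 2
      push_cast; omega
    · rw [if_neg h, if_pos (by push_cast; omega), if_neg (by push_cast; omega)]
      simp



/-- The window function `χ̂`. -/
def chihat (p q : ℕ) (t : ℤ) : ℤ :=
  if (q : ℤ) ≤ t % (p * q) ∧ t % (p * q) < q + p then 1
  else if t % (p * q) < p then -1 else 0

lemma gz_eq (p q : ℕ) (t : ℤ) :
    gz p q t = (if (q:ℤ) ≤ t ∧ t < q + p then 1 else 0)
      - (if 0 ≤ t ∧ t < p then 1 else 0) := by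
  unfold gz
  by_cases h : t < 0
  · rw [if_pos h, if_neg (by omega), if_neg (by omega), sub_zero]
  · rw [if_neg h, Gpoly_coeff]
    have h1 : ((t.toNat : ℤ)) = t := by omega
    congr 1
    · by_cases h2 : q ≤ t.toNat ∧ t.toNat < q + p
      · rw [if_pos h2, if_pos (by push_cast; omega)]
      · rw [if_neg h2, if_neg (by push_cast; omega)]
    · by_cases h2 : t.toNat < p
      · rw [if_pos h2, if_pos (by push_cast; omega)]
      · rw [if_neg h2, if_neg (by push_cast; omega)]

lemma gz_support (p q : ℕ) (t : ℤ) (h : gz p q t ≠ 0) : 0 ≤ t ∧ t < (q:ℤ) + p := by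
  rw [gz_eq] at h
  by_contra hc
  push_neg at hc
  by_cases h0 : 0 ≤ t
  · have := hc h0
    rw [if_neg (by omega), if_neg (by omega)] at h
    exact h rfl
  · rw [if_neg (by omega), if_neg (by omega)] at h
    exact h rfl

lemma pq_pos (p q : ℕ) (hp : 2 ≤ p) (hpq : p < q) : (0:ℤ) < (p:ℤ) * q := by
  have h1 : (2:ℤ) ≤ p := by exact_mod_cast hp
  have h2 : (2:ℤ) ≤ q := by exact_mod_cast (show 2 ≤ q by omega)
  nlinarith

lemma pq_bound (p q : ℕ) (hp : 2 ≤ p) (hpq : p < q) : (q:ℤ) + p ≤ (p:ℤ) * q := by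
  have h1 : (2:ℤ) ≤ p := by exact_mod_cast hp
  have h2 : (3:ℤ) ≤ q := by exact_mod_cast (show 3 ≤ q by omega)
  nlinarith

lemma chihat_eq_gz_emod (p q : ℕ) (hp : 2 ≤ p) (hpq : p < q) (t : ℤ) :
    chihat p q t = gz p q (t % (p * q)) := by
  have hN : (0:ℤ) < (p:ℤ) * q := pq_pos p q hp hpq
  have hs0 : 0 ≤ t % ((p:ℤ) * q) := Int.emod_nonneg t (by omega)
  have hsN : t % ((p:ℤ) * q) < (p:ℤ) * q := Int.emod_lt_of_pos t hN
  have hpqN : (q:ℤ) + p ≤ (p:ℤ) * q := pq_bound p q hp hpq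
  rw [gz_eq]
  unfold chihat
  push_cast
  by_cases h1 : (q:ℤ) ≤ t % ((p:ℤ)*q) ∧ t % ((p:ℤ)*q) < q + p
  · rw [if_pos h1, if_pos h1, if_neg (by omega)]
    norm_num
  · rw [if_neg h1, if_neg h1]
    by_cases h2 : t % ((p:ℤ)*q) < p
    · rw [if_pos h2, if_pos (by omega)]
      norm_num
    · rw [if_neg h2, if_neg (by omega)]
      norm_num

lemma gz_shift_eq_zero (p q : ℕ) (hp : 2 ≤ p) (hpq : p < q) (t c : ℤ)
    (hc : c ≠ t / ((p:ℤ) * q)) : gz p q (t - c * ((p:ℤ) * q)) = 0 := by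
  have hN : (0:ℤ) < (p:ℤ) * q := pq_pos p q hp hpq
  have hpqN : (q:ℤ) + p ≤ (p:ℤ) * q := pq_bound p q hp hpq
  by_contra h
  obtain ⟨h0, h1⟩ := gz_support p q _ h
  apply hc
  have : t / ((p:ℤ)*q) = c ∧ t % ((p:ℤ)*q) = t - c * ((p:ℤ)*q) := by
    rw [Int.ediv_emod_unique hN]
    constructor
    · ring
    · constructor
      · exact h0
      · omega
  omega

/-- Expansion of `χ̂` as a sum of shifted copies of `gz`. -/
lemma chihat_expand (p q : ℕ) (hp : 2 ≤ p) (hpq : p < q) (t c₀ : ℤ) (K : ℕ)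
    (hlo : c₀ ≤ t / ((p:ℤ) * q)) (hhi : t / ((p:ℤ) * q) < c₀ + K) :
    chihat p q t = ∑ i ∈ Finset.range K, gz p q (t - (c₀ + i) * ((p:ℤ) * q)) := by
  have hN : (0:ℤ) < (p:ℤ) * q := pq_pos p q hp hpq
  set d := t / ((p:ℤ) * q) with hd
  have hi0 : (d - c₀).toNat ∈ Finset.range K := by
    rw [Finset.mem_range]; omega
  rw [Finset.sum_eq_single_of_mem _ hi0 (fun i _ hne => by
    apply gz_shift_eq_zero p q hp hpq
    omega)]
  have harg : c₀ + ((d - c₀).toNat : ℤ) = d := by omega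
  rw [harg]
  have : t - d * ((p:ℤ) * q) = t % ((p:ℤ) * q) := by
    rw [Int.emod_def]; ring
  rw [this, chihat_eq_gz_emod p q hp hpq]


lemma az_big (M : ℕ) (t : ℤ) (h : (M.totient : ℤ) < t) : az M t = 0 := by
  unfold az
  rw [if_neg (by omega)]
  apply coeff_eq_zero_of_natDegree_lt
  rw [natDegree_cyclotomic]
  omega

lemma az_neg (M : ℕ) (t : ℤ) (h : t < 0) : az M t = 0 := by
  unfold az; rw [if_pos h]

lemma sum_Tz_telescope (p q r : ℕ) (hp : p.Prime) (hq : q.Prime) (hr : r.Prime)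
    (hpq : p < q) (hqr : q < r)
    (hkey : cyclotomic (p * q * r) ℤ * (X ^ (p * q) - 1) =
      expand ℤ r (cyclotomic (p * q) ℤ) * Gpoly p q)
    (n c₀ : ℤ) (K : ℕ) :
    ∑ i ∈ Finset.range K, Tz p q r (n - (c₀ + i) * ((p:ℤ) * q))
      = az (p*q*r) (n - (c₀ + K) * ((p:ℤ)*q)) - az (p*q*r) (n - c₀ * ((p:ℤ)*q)) := by
  have h1 : ∀ i : ℕ, Tz p q r (n - (c₀ + i) * ((p:ℤ)*q))
      = (fun j : ℕ => az (p*q*r) (n - (c₀ + j) * ((p:ℤ)*q))) (i+1)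
        - (fun j : ℕ => az (p*q*r) (n - (c₀ + j) * ((p:ℤ)*q))) i := by
    intro i
    rw [Tz_eq p q r hp hq hr hpq hqr hkey]
    simp only
    congr 2
    push_cast; ring
  rw [Finset.sum_congr rfl (fun i _ => h1 i),
    Finset.sum_range_sub (fun j : ℕ => az (p*q*r) (n - (c₀ + j) * ((p:ℤ)*q))) K]
  simp

lemma full_sum (p q r : ℕ) (hp : p.Prime) (hq : q.Prime) (hr : r.Prime)
    (hp2 : 2 ≤ p) (hpq : p < q) (hqr : q < r)
    (hkey : cyclotomic (p * q * r) ℤ * (X ^ (p * q) - 1) =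
      expand ℤ r (cyclotomic (p * q) ℤ) * Gpoly p q)
    (n : ℕ) :
    ∑ m ∈ Finset.range ((p*q).totient + 1),
      (cyclotomic (p*q) ℤ).coeff m * chihat p q ((n:ℤ) - (m:ℤ) * r) = 0 := by
  have hN : (0:ℤ) < (p:ℤ)*q := pq_pos p q hp2 hpq
  set Mt : ℤ := ((p*q*r).totient : ℤ) with hMt
  set Nt : ℤ := (((p*q).totient : ℕ) : ℤ) with hNt
  have hMt0 : 0 ≤ Mt := Int.natCast_nonneg _
  have hNt0 : 0 ≤ Nt := Int.natCast_nonneg _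
  have hr0 : (0:ℤ) ≤ (r:ℤ) := Int.natCast_nonneg _
  set c₀ : ℤ := -(Mt + (r:ℤ) * Nt + 1) with hc₀
  have hc₀neg : c₀ ≤ 0 := by
    have : 0 ≤ (r:ℤ) * Nt := mul_nonneg hr0 hNt0
    omega
  set K : ℕ := ((n:ℤ) + 1 - c₀).toNat with hK
  have hcK : c₀ + (K:ℤ) = (n:ℤ) + 1 := by omega
  have hc₀N : c₀ * ((p:ℤ)*q) ≤ c₀ := by
    have := mul_le_mul_of_nonpos_left (show (1:ℤ) ≤ (p:ℤ)*q by omega) hc₀neg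
    simpa using this
  have hstep : ∀ m ∈ Finset.range ((p*q).totient + 1),
      (cyclotomic (p*q) ℤ).coeff m * chihat p q ((n:ℤ) - (m:ℤ)*r)
      = ∑ i ∈ Finset.range K,
          (cyclotomic (p*q) ℤ).coeff m * gz p q ((n:ℤ) - (m:ℤ)*r - (c₀+(i:ℤ))*((p:ℤ)*q)) := by
    intro m hm
    have hm' : (m:ℤ) ≤ Nt := by
      rw [hNt]
      exact_mod_cast Nat.lt_succ_iff.mp (Finset.mem_range.mp hm)
    have hmr : (m:ℤ)*r ≤ Nt * r := mul_le_mul_of_nonneg_right hm' hr0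
    have hlo : c₀ ≤ ((n:ℤ) - (m:ℤ)*r) / ((p:ℤ)*q) := by
      rw [Int.le_ediv_iff_mul_le hN]
      have hn0 : (0:ℤ) ≤ (n:ℤ) := Int.natCast_nonneg _
      have : c₀ ≤ -((m:ℤ)*r) := by
        have : (r:ℤ) * Nt = Nt * r := by ring
        omega
      linarith
    have hhi : ((n:ℤ) - (m:ℤ)*r) / ((p:ℤ)*q) < c₀ + K := by
      rw [hcK]
      have h1 : ((n:ℤ) - (m:ℤ)*r) / ((p:ℤ)*q) ≤ (n:ℤ) / ((p:ℤ)*q) := by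
        apply Int.ediv_le_ediv hN
        have : (0:ℤ) ≤ (m:ℤ)*r := mul_nonneg (Int.natCast_nonneg _) hr0
        omega
      have h2 : (n:ℤ) / ((p:ℤ)*q) ≤ (n:ℤ) := Int.ediv_le_self _ (Int.natCast_nonneg _)
      omega
    rw [chihat_expand p q hp2 hpq _ c₀ K hlo hhi, Finset.mul_sum]
  rw [Finset.sum_congr rfl hstep, Finset.sum_comm]
  have hTz : ∀ i ∈ Finset.range K,
      ∑ m ∈ Finset.range ((p*q).totient + 1),
        (cyclotomic (p*q) ℤ).coeff m * gz p q ((n:ℤ) - (m:ℤ)*r - (c₀+(i:ℤ))*((p:ℤ)*q))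
      = Tz p q r ((n:ℤ) - (c₀+(i:ℤ))*((p:ℤ)*q)) := by
    intro i _
    unfold Tz
    refine Finset.sum_congr rfl fun m _ => ?_
    congr 1
    ring
  rw [Finset.sum_congr rfl hTz, sum_Tz_telescope p q r hp hq hr hpq hqr hkey, hcK]
  have e1 : az (p*q*r) ((n:ℤ) - ((n:ℤ)+1) * ((p:ℤ)*q)) = 0 := by
    apply az_neg
    have h0 : (0:ℤ) ≤ (n:ℤ) + 1 := by omega
    have := le_mul_of_one_le_right h0 (show (1:ℤ) ≤ (p:ℤ)*q by omega)
    omega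
  have e2 : az (p*q*r) ((n:ℤ) - c₀ * ((p:ℤ)*q)) = 0 := by
    apply az_big
    rw [← hMt]
    have hn0 : (0:ℤ) ≤ (n:ℤ) := Int.natCast_nonneg _
    have : 0 ≤ (r:ℤ) * Nt := mul_nonneg hr0 hNt0
    omega
  rw [e1, e2]
  ring

lemma partial_sum (p q r : ℕ) (hp : p.Prime) (hq : q.Prime) (hr : r.Prime)
    (hp2 : 2 ≤ p) (hpq : p < q) (hqr : q < r)
    (hkey : cyclotomic (p * q * r) ℤ * (X ^ (p * q) - 1) =
      expand ℤ r (cyclotomic (p * q) ℤ) * Gpoly p q)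
    (n : ℕ) :
    ∑ m ∈ (Finset.range ((p*q).totient + 1)).filter (fun m : ℕ => (m:ℤ) * r ≤ (n:ℤ)),
      (cyclotomic (p*q) ℤ).coeff m * chihat p q ((n:ℤ) - (m:ℤ) * r)
      = - az (p*q*r) (n:ℤ) := by
  have hN : (0:ℤ) < (p:ℤ)*q := pq_pos p q hp2 hpq
  have hr0 : (0:ℤ) ≤ (r:ℤ) := Int.natCast_nonneg _
  set K : ℕ := n + 1 with hK
  have hstep : ∀ m ∈ (Finset.range ((p*q).totient + 1)).filter (fun m : ℕ => (m:ℤ) * r ≤ (n:ℤ)),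
      (cyclotomic (p*q) ℤ).coeff m * chihat p q ((n:ℤ) - (m:ℤ)*r)
      = ∑ i ∈ Finset.range K,
          (cyclotomic (p*q) ℤ).coeff m * gz p q ((n:ℤ) - (m:ℤ)*r - ((0:ℤ)+(i:ℤ))*((p:ℤ)*q)) := by
    intro m hm
    have hmn : (m:ℤ) * r ≤ (n:ℤ) := (Finset.mem_filter.mp hm).2
    have hlo : (0:ℤ) ≤ ((n:ℤ) - (m:ℤ)*r) / ((p:ℤ)*q) :=
      Int.ediv_nonneg (by omega) (le_of_lt hN)
    have hhi : ((n:ℤ) - (m:ℤ)*r) / ((p:ℤ)*q) < 0 + K := by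
      have h1 : ((n:ℤ) - (m:ℤ)*r) / ((p:ℤ)*q) ≤ (n:ℤ) / ((p:ℤ)*q) := by
        apply Int.ediv_le_ediv hN
        have : (0:ℤ) ≤ (m:ℤ)*r := mul_nonneg (Int.natCast_nonneg _) hr0
        omega
      have h2 : (n:ℤ) / ((p:ℤ)*q) ≤ (n:ℤ) := Int.ediv_le_self _ (Int.natCast_nonneg _)
      push_cast
      omega
    rw [chihat_expand p q hp2 hpq _ 0 K hlo hhi, Finset.mul_sum]
  rw [Finset.sum_congr rfl hstep, Finset.sum_comm]
  have hTz : ∀ i ∈ Finset.range K,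
      ∑ m ∈ (Finset.range ((p*q).totient + 1)).filter (fun m : ℕ => (m:ℤ) * r ≤ (n:ℤ)),
        (cyclotomic (p*q) ℤ).coeff m * gz p q ((n:ℤ) - (m:ℤ)*r - ((0:ℤ)+(i:ℤ))*((p:ℤ)*q))
      = Tz p q r ((n:ℤ) - ((0:ℤ)+(i:ℤ))*((p:ℤ)*q)) := by
    intro i _
    unfold Tz
    rw [Finset.sum_subset (Finset.filter_subset _ _)]
    · exact Finset.sum_congr rfl fun m _ => by congr 1; ring
    · intro m hm hnm
      rw [Finset.mem_filter] at hnm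
      have hmn : ¬ ((m:ℤ) * r ≤ (n:ℤ)) := fun h => hnm ⟨hm, h⟩
      have hg : gz p q ((n:ℤ) - (m:ℤ)*r - ((0:ℤ)+(i:ℤ))*((p:ℤ)*q)) = 0 := by
        by_contra h
        obtain ⟨h0, _⟩ := gz_support p q _ h
        have hiN : (0:ℤ) ≤ ((0:ℤ)+(i:ℤ))*((p:ℤ)*q) :=
          mul_nonneg (by omega) (le_of_lt hN)
        omega
      rw [hg, mul_zero]
  rw [Finset.sum_congr rfl hTz, sum_Tz_telescope p q r hp hq hr hpq hqr hkey]
  have e1 : az (p*q*r) ((n:ℤ) - ((0:ℤ)+(K:ℤ)) * ((p:ℤ)*q)) = 0 := by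
    apply az_neg
    have h0 : (0:ℤ) ≤ (0:ℤ) + (K:ℤ) := by omega
    have := le_mul_of_one_le_right h0 (show (1:ℤ) ≤ (p:ℤ)*q by omega)
    push_cast at this ⊢
    omega
  rw [e1]
  simp
lemma emod_eval (N w : ℤ) (hN : 0 < N) (hlo : -N ≤ w) (hhi : w < N) :
    w % N = w ∨ w % N = w + N := by
  by_cases h : 0 ≤ w
  · left; exact Int.emod_eq_of_lt h hhi
  · right
    conv_lhs => rw [show w = (w + N) + N * (-1) by ring, Int.add_mul_emod_self_left]
    exact Int.emod_eq_of_lt (by omega) (by omega)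

lemma emod_eval2 (N w : ℤ) (hN : 0 < N) (hlo : 0 ≤ w) (hhi : w < 2 * N) :
    w % N = w ∨ w % N = w - N := by
  by_cases h : w < N
  · left; exact Int.emod_eq_of_lt hlo h
  · right
    conv_lhs => rw [show w = (w - N) + N * 1 by ring, Int.add_mul_emod_self_left]
    exact Int.emod_eq_of_lt (by omega) (by omega)

lemma window_iff1 (N pz qz s0 w : ℤ) (hNb : qz + pz ≤ N) (hp : 0 < pz) (hq : pz < qz)
    (hs0 : 0 ≤ s0) (hs0N : s0 < N) (hw : w = s0 + 1 - qz ∨ w = s0 + 1 - qz + N)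
    (hw0 : 0 ≤ w) (hwN : w < N) :
    (1 ≤ w ∧ w ≤ pz) ↔ (qz ≤ s0 ∧ s0 < qz + pz) := by
  rcases hw with h | h <;> omega

lemma window_iff2 (N pz qz s0 w : ℤ) (hNb : qz + pz ≤ N) (hp : 0 < pz) (hq : pz < qz)
    (hs0 : 0 ≤ s0) (hs0N : s0 < N) (hw : w = s0 + 1 ∨ w = s0 + 1 - N)
    (hw0 : 0 ≤ w) (hwN : w < N) :
    (1 ≤ w ∧ w ≤ pz) ↔ s0 < pz := by
  rcases hw with h | h <;> omega

/-- membership in a cyclic window `(a, a+s]` mod `N`. -/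
lemma window_mem (N a x s : ℤ) (hN : 0 < N) (hs : 0 < s) (hsN : s < N)
    (hx : 0 ≤ x) (hxN : x < N) (ha : 0 ≤ a) (haN : a < N) :
    ((x ≤ (a + s) % N ∧ a < x) ∨ (x ≤ (a + s) % N ∧ (a + s) % N < a) ∨
      ((a + s) % N < a ∧ a < x)) ↔ (1 ≤ (x - a) % N ∧ (x - a) % N ≤ s) := by
  have hb : (a + s) % N = a + s ∨ (a + s) % N = a + s - N := by
    by_cases h : a + s < N
    · left; exact Int.emod_eq_of_lt (by omega) h
    · right
      have h2 : (a + s) % N = (a + s - N) % N := by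
        conv_lhs => rw [show a + s = (a + s - N) + N * 1 by ring]
        rw [Int.add_mul_emod_self_left]
      rw [h2, Int.emod_eq_of_lt (by omega) (by omega)]
  have hxa : (x - a) % N = x - a ∨ (x - a) % N = x - a + N := by
    by_cases h : a ≤ x
    · left; exact Int.emod_eq_of_lt (by omega) (by omega)
    · right
      have h2 : (x - a) % N = (x - a + N) % N := by
        conv_lhs => rw [show x - a = (x - a + N) + N * (-1) by ring]
        rw [Int.add_mul_emod_self_left]
      rw [h2, Int.emod_eq_of_lt (by omega) (by omega)]
  have hm1 : 0 ≤ (x - a) % N := Int.emod_nonneg _ (by omega)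
  have hm2 : (x - a) % N < N := Int.emod_lt_of_pos _ hN
  have hm3 : 0 ≤ (a + s) % N := Int.emod_nonneg _ (by omega)
  have hm4 : (a + s) % N < N := Int.emod_lt_of_pos _ hN
  rcases hb with hb | hb <;> rcases hxa with h | h <;> omega

lemma chi_eq_chihat (p q : ℕ) (hp2 : 2 ≤ p) (hpq : p < q) (nn i : ℤ) :
    chi p q nn i = chihat p q (i - nn) := by
  have hN : (0:ℤ) < (p:ℤ) * q := pq_pos p q hp2 hpq
  have hNe : ((p:ℤ) * q) ≠ 0 := by omega
  have hpqN : (q:ℤ) + p ≤ (p:ℤ) * q := pq_bound p q hp2 hpq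
  have hpN : (p:ℤ) < (p:ℤ) * q := by
    have h2 : (2:ℤ) ≤ q := by exact_mod_cast (show 2 ≤ q by omega)
    have h1 : (0:ℤ) < p := by exact_mod_cast (show 0 < p by omega)
    nlinarith
  have hp0 : (0:ℤ) < p := by exact_mod_cast (show 0 < p by omega)
  set N : ℤ := (p:ℤ) * q with hNdef
  set x : ℤ := (i + 1) % N with hxdef
  have hx0 : 0 ≤ x := Int.emod_nonneg _ hNe
  have hxN : x < N := Int.emod_lt_of_pos _ hN
  set s0 : ℤ := (i - nn) % N with hs0def
  have hs00 : 0 ≤ s0 := Int.emod_nonneg _ hNe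
  have hs0N : s0 < N := Int.emod_lt_of_pos _ hN
  -- window 1
  set a1 : ℤ := (nn + q) % N with ha1def
  have ha10 : 0 ≤ a1 := Int.emod_nonneg _ hNe
  have ha1N : a1 < N := Int.emod_lt_of_pos _ hN
  have hb1 : (nn + p + q) % N = (a1 + p) % N := by
    rw [ha1def, Int.emod_add_emod]
    congr 1; ring
  have hw1 := window_mem N a1 x p hN hp0 hpN hx0 hxN ha10 ha1N
  have he1 : (x - a1) % N = (s0 + 1 - q) % N := by
    have h' : (s0 + 1 - q) % N = ((i - nn) + (1 - (q:ℤ))) % N := by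
      rw [hs0def, show (i - nn) % N + 1 - (q:ℤ) = (i - nn) % N + (1 - (q:ℤ)) by ring,
        Int.emod_add_emod]
    rw [hxdef, ha1def, ← Int.sub_emod, h']
    congr 1
    ring
  have C1 : ((x ≤ (nn + p + q) % N ∧ a1 < x) ∨
      (x ≤ (nn + p + q) % N ∧ (nn + p + q) % N < a1) ∨
      ((nn + p + q) % N < a1 ∧ a1 < x)) ↔ ((q:ℤ) ≤ s0 ∧ s0 < q + p) := by
    rw [hb1, hw1, he1]
    exact window_iff1 N p q s0 _ hpqN hp0 (by exact_mod_cast hpq) hs00 hs0N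
      (emod_eval N (s0 + 1 - q) hN (by omega) (by omega))
      (Int.emod_nonneg _ hNe) (Int.emod_lt_of_pos _ hN)
  -- window 2
  set a2 : ℤ := nn % N with ha2def
  have ha20 : 0 ≤ a2 := Int.emod_nonneg _ hNe
  have ha2N : a2 < N := Int.emod_lt_of_pos _ hN
  have hb2 : (nn + p) % N = (a2 + p) % N := by
    rw [ha2def, Int.emod_add_emod]
  have hw2 := window_mem N a2 x p hN hp0 hpN hx0 hxN ha20 ha2N
  have he2 : (x - a2) % N = (s0 + 1) % N := by
    have h' : (s0 + 1) % N = ((i - nn) + 1) % N := by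
      rw [hs0def, Int.emod_add_emod]
    rw [hxdef, ha2def, ← Int.sub_emod, h']
    congr 1
    ring
  have C2 : ((x ≤ (nn + p) % N ∧ a2 < x) ∨
      (x ≤ (nn + p) % N ∧ (nn + p) % N < a2) ∨
      ((nn + p) % N < a2 ∧ a2 < x)) ↔ (s0 < (p:ℤ)) := by
    rw [hb2, hw2, he2]
    exact window_iff2 N p q s0 _ hpqN hp0 (by exact_mod_cast hpq) hs00 hs0N
      (emod_eval2 N (s0 + 1) hN (by omega) (by omega))
      (Int.emod_nonneg _ hNe) (Int.emod_lt_of_pos _ hN)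
  unfold chi chihat
  rw [if_congr C1 rfl (if_congr C2 rfl rfl)]

end ChiProofAux

theorem A_le_max_sum_chi (p q r : ℕ) (hp : p.Prime) (hq : q.Prime) (hr : r.Prime)
    (hop : Odd p) (hoq : Odd q) (hor : Odd r) (hpq : p < q) (hqr : q < r) :
    ∃ i j : ℤ, (cycCoeffMax (p * q * r) : ℤ) ≤
      |∑ m ∈ (Finset.range (Nat.totient (p * q) + 1)).filter (fun m : ℕ => j ≤ (m : ℤ)),
        (Polynomial.cyclotomic (p * q) ℤ).coeff m * chi p q ((m : ℤ) * r) i| := by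
  classical
  have hp2 : 2 ≤ p := hp.two_le
  have hkey := cyclotomic_mul_identity p q r hp hq hr hpq hqr
  obtain ⟨n, hn, hsup⟩ := Finset.exists_mem_eq_sup
    (Finset.range ((p*q*r).totient + 1)) ⟨0, Finset.mem_range.mpr (by omega)⟩
    (fun i => ((cyclotomic (p*q*r) ℤ).coeff i).natAbs)
  refine ⟨(n:ℤ), (n:ℤ) / (r:ℤ) + 1, ?_⟩
  have hr0 : (0:ℤ) < (r:ℤ) := by exact_mod_cast hr.pos
  -- the filter is the same as `¬ (m r ≤ n)`
  have hfeq : (Finset.range ((p*q).totient + 1)).filter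
        (fun m : ℕ => (n:ℤ)/(r:ℤ) + 1 ≤ (m:ℤ))
      = (Finset.range ((p*q).totient + 1)).filter
        (fun m : ℕ => ¬ ((m:ℤ) * r ≤ (n:ℤ))) := by
    apply Finset.filter_congr
    intro m _
    rw [Int.add_one_le_iff, Int.ediv_lt_iff_lt_mul hr0, not_le]
  have hterm : ∀ m ∈ (Finset.range ((p*q).totient + 1)).filter
      (fun m : ℕ => ¬ ((m:ℤ) * r ≤ (n:ℤ))),
      (cyclotomic (p*q) ℤ).coeff m * chi p q ((m:ℤ) * r) (n:ℤ)
      = (cyclotomic (p*q) ℤ).coeff m * chihat p q ((n:ℤ) - (m:ℤ) * r) := by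
    intro m _
    rw [chi_eq_chihat p q hp2 hpq ((m:ℤ) * r) (n:ℤ)]
  rw [hfeq, Finset.sum_congr rfl hterm]
  have hfull := full_sum p q r hp hq hr hp2 hpq hqr hkey n
  have hpart := partial_sum p q r hp hq hr hp2 hpq hqr hkey n
  have hsplit := Finset.sum_filter_add_sum_filter_not (Finset.range ((p*q).totient + 1))
    (fun m : ℕ => (m:ℤ) * r ≤ (n:ℤ))
    (fun m : ℕ => (cyclotomic (p*q) ℤ).coeff m * chihat p q ((n:ℤ) - (m:ℤ) * r))
  have hS : ∑ m ∈ (Finset.range ((p*q).totient + 1)).filter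
      (fun m : ℕ => ¬ ((m:ℤ) * r ≤ (n:ℤ))),
      (cyclotomic (p*q) ℤ).coeff m * chihat p q ((n:ℤ) - (m:ℤ) * r)
      = az (p*q*r) (n:ℤ) := by
    rw [hpart] at hsplit
    omega
  rw [hS]
  have haz : az (p*q*r) (n:ℤ) = (cyclotomic (p*q*r) ℤ).coeff n := by
    unfold az
    rw [if_neg (by omega)]
    simp
  rw [haz]
  have : cycCoeffMax (p*q*r) = ((cyclotomic (p*q*r) ℤ).coeff n).natAbs := hsup
  rw [this, Int.abs_eq_natAbs]
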